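/- For any n×n matrix Ω (in particular a block-diagonal cluster matrix or an HAC weight matrix built from the common residual vector), the (2,2) block of the sandwich estimator (X'X)^{-1}X' Ω X(X'X)^{-1} equals (X̃2'X̃2)^{-1}X̃2' Ω X̃2(X̃2'X̃2)^{-1}. -/

import Mathlib

open Matrix

lemma submatrix_inr_mul {K L m p : Type*} [Fintype m]
    (P : Matrix (K ⊕ L) m ℝ) (Q : Matrix m p ℝ) :
    (P * Q).submatrix Sum.inr id = P.submatrix Sum.inr id * Q := by
  ext i j; simp [mul_apply]

lemma toBlocks22_mul {K L m K' L' : Type*} [Fintype m]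
    (A : Matrix (K ⊕ L) m ℝ) (B : Matrix m (K' ⊕ L') ℝ) :
    (A * B).toBlocks₂₂ = A.submatrix Sum.inr id * B.submatrix id Sum.inr := by
  ext i j; simp [toBlocks₂₂, mul_apply]

theorem stmt_9 {n K L : ℕ}
    (X1 : Matrix (Fin n) (Fin K) ℝ) (X2 : Matrix (Fin n) (Fin L) ℝ)
    (Ω : Matrix (Fin n) (Fin n) ℝ)
    (X : Matrix (Fin n) (Fin K ⊕ Fin L) ℝ) (hX : X = Matrix.fromCols X1 X2)
    (H1 : Matrix (Fin n) (Fin n) ℝ) (hH1 : H1 = X1 * (X1ᵀ * X1)⁻¹ * X1ᵀ)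
    (X2t : Matrix (Fin n) (Fin L) ℝ) (hX2t : X2t = (1 - H1) * X2)
    (hGX : IsUnit (Xᵀ * X)) (hG1 : IsUnit (X1ᵀ * X1)) (hG2 : IsUnit (X2tᵀ * X2t)) :
    ((Xᵀ * X)⁻¹ * Xᵀ * Ω * X * (Xᵀ * X)⁻¹).toBlocks₂₂
      = (X2tᵀ * X2t)⁻¹ * X2tᵀ * Ω * X2t * (X2tᵀ * X2t)⁻¹ := by
  have hdX : IsUnit (Xᵀ * X).det := (isUnit_iff_isUnit_det _).mp hGX
  have hd1 : IsUnit (X1ᵀ * X1).det := (isUnit_iff_isUnit_det _).mp hG1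
  have hd2 : IsUnit (X2tᵀ * X2t).det := (isUnit_iff_isUnit_det _).mp hG2
  -- H1 facts
  have hG1symm : (X1ᵀ * X1)ᵀ = X1ᵀ * X1 := by rw [transpose_mul, transpose_transpose]
  have hH1symm : H1ᵀ = H1 := by
    rw [hH1, transpose_mul, transpose_mul, transpose_transpose, transpose_nonsing_inv,
      hG1symm, Matrix.mul_assoc]
  have hH1X1 : H1 * X1 = X1 := by
    rw [hH1]
    simp only [Matrix.mul_assoc]
    rw [Matrix.nonsing_inv_mul _ hd1, Matrix.mul_one]
  have hH1idem : H1 * H1 = H1 := by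
    conv_lhs => rw [hH1]
    simp only [Matrix.mul_assoc]
    rw [← Matrix.mul_assoc X1ᵀ X1, ← Matrix.mul_assoc (X1ᵀ * X1)⁻¹,
      Matrix.nonsing_inv_mul _ hd1, Matrix.one_mul, ← Matrix.mul_assoc, hH1]
  have hid : (1 - H1) * (1 - H1) = 1 - H1 := by
    rw [Matrix.mul_sub, Matrix.sub_mul, Matrix.sub_mul, Matrix.one_mul, Matrix.mul_one,
      hH1idem, Matrix.one_mul]
    abel
  -- X2t facts
  have hX2tT : X2tᵀ = X2ᵀ * (1 - H1) := by
    rw [hX2t, transpose_mul, transpose_sub, transpose_one, hH1symm]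
  have hX2tX1 : X2tᵀ * X1 = 0 := by
    rw [hX2tT, Matrix.mul_assoc, Matrix.sub_mul, Matrix.one_mul, hH1X1, sub_self,
      Matrix.mul_zero]
  have hproj : X2tᵀ * (1 - H1) = X2tᵀ := by
    rw [hX2tT, Matrix.mul_assoc, hid]
  have hX2tX2 : X2tᵀ * X2 = X2tᵀ * X2t := by
    nth_rewrite 3 [hX2t]
    rw [← Matrix.mul_assoc, hproj]
  set G2 := X2tᵀ * X2t with hG2def
  have hG2symm : G2ᵀ = G2 := by rw [hG2def, transpose_mul, transpose_transpose]
  set B := G2⁻¹ * X2tᵀ with hBdef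
  have hBX1 : B * X1 = 0 := by rw [hBdef, Matrix.mul_assoc, hX2tX1, Matrix.mul_zero]
  have hBX2 : B * X2 = 1 := by
    rw [hBdef, Matrix.mul_assoc, hX2tX2, Matrix.nonsing_inv_mul _ hd2]
  -- B = D * Xᵀ
  set D : Matrix (Fin L) (Fin K ⊕ Fin L) ℝ :=
    fromCols (-(G2⁻¹ * (X2ᵀ * X1) * (X1ᵀ * X1)⁻¹)) G2⁻¹ with hDdef
  have hXT : Xᵀ = fromRows X1ᵀ X2ᵀ := by rw [hX, transpose_fromCols]
  have hBD : B = D * Xᵀ := by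
    rw [hDdef, hXT, fromCols_mul_fromRows, hBdef, hX2tT, Matrix.neg_mul,
      Matrix.mul_sub X2ᵀ, Matrix.mul_one, Matrix.mul_sub]
    rw [show G2⁻¹ * (X2ᵀ * H1) = G2⁻¹ * (X2ᵀ * X1) * (X1ᵀ * X1)⁻¹ * X1ᵀ from by
      rw [hH1]; simp only [Matrix.mul_assoc]]
    abel
  -- second block row of (XᵀX)⁻¹Xᵀ
  set M := (Xᵀ * X)⁻¹ * Xᵀ with hMdef
  set A := M.submatrix Sum.inr id with hAdef
  set C := ((Xᵀ * X)⁻¹).submatrix Sum.inr id with hCdef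
  have hAC : A = C * Xᵀ := by rw [hAdef, hMdef, submatrix_inr_mul, hCdef]
  have hMX : M * X = 1 := by
    rw [hMdef, Matrix.mul_assoc, Matrix.nonsing_inv_mul _ hdX]
  have hAXeq : A * X = B * X := by
    have h1 : A * X = (1 : Matrix (Fin K ⊕ Fin L) (Fin K ⊕ Fin L) ℝ).submatrix Sum.inr id := by
      rw [hAdef, ← submatrix_inr_mul, hMX]
    have h2 : B * X = fromCols 0 1 := by
      rw [hX, mul_fromCols, hBX1, hBX2]
    rw [h1, h2]
    ext i j
    rcases j with j | j <;> simp [fromCols, one_apply]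
  have hCD : C = D := by
    have h : C * (Xᵀ * X) = D * (Xᵀ * X) := by
      rw [← Matrix.mul_assoc, ← Matrix.mul_assoc, ← hAC, ← hBD, hAXeq]
    calc C = C * ((Xᵀ * X) * (Xᵀ * X)⁻¹) := by
              rw [Matrix.mul_nonsing_inv _ hdX, Matrix.mul_one]
      _ = D * ((Xᵀ * X) * (Xᵀ * X)⁻¹) := by
              rw [← Matrix.mul_assoc, h, Matrix.mul_assoc]
      _ = D := by rw [Matrix.mul_nonsing_inv _ hdX, Matrix.mul_one]
  have hAB : A = B := by rw [hAC, hCD, ← hBD]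
  -- assemble
  have hGsymm : (Xᵀ * X)ᵀ = Xᵀ * X := by rw [transpose_mul, transpose_transpose]
  have hMT : Mᵀ = X * (Xᵀ * X)⁻¹ := by
    rw [hMdef, transpose_mul, transpose_transpose, transpose_nonsing_inv, hGsymm]
  have hLHS : (Xᵀ * X)⁻¹ * Xᵀ * Ω * X * (Xᵀ * X)⁻¹ = (M * Ω) * Mᵀ := by
    rw [hMT, hMdef, Matrix.mul_assoc (M * Ω)]
  rw [hLHS, toBlocks22_mul, submatrix_inr_mul, ← hAdef]
  have hMTsub : Mᵀ.submatrix id Sum.inr = Aᵀ := by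
    ext i j; simp [hAdef]
  rw [hMTsub, hAB]
  have hBT : Bᵀ = X2t * G2⁻¹ := by
    rw [hBdef, transpose_mul, transpose_transpose, transpose_nonsing_inv, hG2symm]
  rw [hBT, ← Matrix.mul_assoc]
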